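/- Let ρ satisfy (C1)-(C4) and subadditivity (P1). For any adapted process H, any ρ-martingale M, and any stopping time τ with t ≤ τ ≤ T a.s., it holds that ρ_t(H_τ) ≤ ρ_t(H_τ + M_t − M_τ). -/

import Mathlib

open MeasureTheory

/-- Let `ρ` satisfy (C1)–(C4) and subadditivity (P1). For any adapted process
`H`, any `ρ`-martingale `M`, and any stopping time `τ` with `t ≤ τ ≤ T`,
one has `ρ_t (H_τ) ≤ ρ_t (H_τ + M_t - M_τ)`. -/
theorem dmu_martingale_shift_inequality
    {Ω : Type*} {m : MeasurableSpace Ω}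
    (F : MeasureTheory.Filtration ℕ m) (T : ℕ)
    (ρ : ℕ → (Ω → ℝ) → (Ω → ℝ))
    (hmeas : ∀ s (X : Ω → ℝ), Measurable[F s] (ρ s X))
    (hmono : ∀ s, s ≤ T → ∀ (X Y : Ω → ℝ), X ≤ Y → ρ s X ≤ ρ s Y)
    (hreg : ∀ s, s ≤ T → ∀ (X : Ω → ℝ) (A : Set Ω), MeasurableSet[F s] A →
      ρ s (A.indicator X) = A.indicator (ρ s X))
    (hrec : ∀ s, s < T → ∀ (X : Ω → ℝ), ρ s (ρ (s + 1) X) = ρ s X)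
    (hcti : ∀ s, s ≤ T → ∀ (X Y : Ω → ℝ), Measurable[F s] Y →
      ρ s (X + Y) = ρ s X + Y)
    (hsub : ∀ s, s ≤ T → ∀ (X Y : Ω → ℝ), ρ s (X + Y) ≤ ρ s X + ρ s Y)
    (H : ℕ → Ω → ℝ) (hHadapted : ∀ s, Measurable[F s] (H s))
    (M : ℕ → Ω → ℝ) (hMadapted : ∀ s, Measurable[F s] (M s))
    (hMmart : ∀ s, s < T → M s = ρ s (M (s + 1)))
    (t : ℕ) (ht : t ≤ T)
    (τ : Ω → ℕ) (hτ : ∀ j, MeasurableSet[F j] {ω | τ ω = j})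
    (hτb : ∀ ω, t ≤ τ ω ∧ τ ω ≤ T) :
    ρ t (fun ω => H (τ ω) ω)
      ≤ ρ t (fun ω => H (τ ω) ω + M t ω - M (τ ω) ω) := by
  -- ρ_s 0 = 0 via regularity with A = ∅
  have hzero : ∀ s, s ≤ T → ρ s 0 = 0 := by
    intro s hs
    have h := hreg s hs 0 ∅ (@MeasurableSet.empty _ (F s))
    simp at h; exact h
  -- ρ_s is the identity on F_s-measurable functions
  have hid : ∀ s, s ≤ T → ∀ X : Ω → ℝ, Measurable[F s] X → ρ s X = X := by
    intro s hs X hX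
    have h := hcti s hs 0 X hX
    rw [hzero s hs] at h
    simpa using h
  -- measurability of the sets {min (τ ·) s = j}
  have hsetmeas : ∀ s j, MeasurableSet[F s] {ω | min (τ ω) s = j} := by
    intro s j
    rcases lt_trichotomy j s with hjs | hjs | hjs
    · have : {ω | min (τ ω) s = j} = {ω | τ ω = j} := by
        ext ω; simp only [Set.mem_setOf_eq]; omega
      rw [this]
      exact F.mono hjs.le _ (hτ j)
    · subst hjs
      have : {ω | min (τ ω) j = j} = (⋃ i ∈ Finset.range j, {ω | τ ω = i})ᶜ := by
        ext ω
        simp only [Set.mem_setOf_eq, Set.mem_compl_iff, Set.mem_iUnion,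
          Finset.mem_range, not_exists]
        constructor
        · intro h i hi; intro hτi; omega
        · intro h
          have : ¬ τ ω < j := fun hlt => h (τ ω) hlt rfl
          omega
      rw [this]
      have hb : MeasurableSet[F j] (⋃ i ∈ Finset.range j, {ω | τ ω = i}) :=
        Finset.measurableSet_biUnion _
          (fun i hi => F.mono (Finset.mem_range.mp hi).le _ (hτ i))
      exact hb.compl
    · have : {ω | min (τ ω) s = j} = ∅ := by
        ext ω; simp only [Set.mem_setOf_eq, Set.mem_empty_iff_false, iff_false]; omega
      rw [this]; exact @MeasurableSet.empty _ (F s)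
  -- the stopped process is adapted
  have hstop : ∀ s, Measurable[F s] (fun ω => M (min (τ ω) s) ω) := by
    intro s
    have heq : (fun ω => M (min (τ ω) s) ω)
        = fun ω => ∑ j ∈ Finset.range (s + 1),
            Set.indicator {ω' | min (τ ω') s = j} (M j) ω := by
      funext ω
      rw [Finset.sum_eq_single (min (τ ω) s)]
      · simp [Set.indicator_of_mem, Set.mem_setOf_eq]
      · intro j _ hne
        exact Set.indicator_of_notMem (by simpa [Set.mem_setOf_eq] using (Ne.symm hne)) _
      · intro h
        exact absurd (Finset.mem_range.mpr (Nat.lt_succ_of_le (min_le_right _ _))) h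
    rw [heq]
    refine Finset.measurable_sum _ (fun j hj => ?_)
    exact Measurable.indicator
      ((hMadapted j).mono (F.mono (Nat.lt_succ_iff.mp (Finset.mem_range.mp hj))) le_rfl)
      (hsetmeas s j)
  set N : Ω → ℝ := fun ω => M (τ ω) ω with hN
  -- key: backward induction (optional sampling)
  have key : ∀ d s, s + d = T → ρ s N = fun ω => M (min (τ ω) s) ω := by
    intro d
    induction d with
    | zero =>
      intro s hsT
      have hNeq : N = fun ω => M (min (τ ω) s) ω := by
        funext ω
        have h2 := (hτb ω).2
        simp only [hN]
        congr 1
        omega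
      rw [hNeq, hid s (by omega) _ (hstop s)]
    | succ d ih =>
      intro s hsT
      have hsltT : s < T := by omega
      have hIH : ρ (s + 1) N = fun ω => M (min (τ ω) (s + 1)) ω := ih (s + 1) (by omega)
      set W : Ω → ℝ := fun ω => M (min (τ ω) (s + 1)) ω with hW
      have h1 : ρ s N = ρ s W := by rw [← hrec s hsltT N, hIH]
      set X : Ω → ℝ := fun ω => M (min (τ ω) s) ω with hX
      set A : Set Ω := {ω | τ ω ≤ s} with hA
      have hAmeas : MeasurableSet[F s] A := by
        have : A = ⋃ i ∈ Finset.range (s + 1), {ω | τ ω = i} := by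
          ext ω
          simp only [hA, Set.mem_setOf_eq, Set.mem_iUnion, Finset.mem_range]
          constructor
          · intro h; exact ⟨τ ω, by omega, rfl⟩
          · rintro ⟨i, hi, hτi⟩; omega
        rw [this]
        exact Finset.measurableSet_biUnion _
          (fun i hi => F.mono (Nat.lt_succ_iff.mp (Finset.mem_range.mp hi)) _ (hτ i))
      have hsle : s ≤ T := hsltT.le
      -- on A : τ < s, so W = X there; on Aᶜ : τ ≥ s
      have hAW : A.indicator W = A.indicator X := by
        funext ω
        by_cases hω : ω ∈ A
        · have hτω : τ ω ≤ s := hω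
          simp only [Set.indicator_of_mem hω]
          simp only [hW, hX]
          congr 1; omega
        · simp [Set.indicator_of_notMem hω]
      have hAcW : Aᶜ.indicator W = Aᶜ.indicator (fun ω => M (s + 1) ω + (X ω - M s ω)) := by
        funext ω
        by_cases hω : ω ∈ Aᶜ
        · have hτω : s < τ ω := by
            simp only [hA, Set.mem_compl_iff, Set.mem_setOf_eq, not_le] at hω; omega
          simp only [Set.indicator_of_mem hω, hW, hX]
          have h1 : min (τ ω) s = s := by omega
          have h3 : min (τ ω) (s + 1) = s + 1 := by omega
          rw [h1, h3]; ring
        · simp [Set.indicator_of_notMem hω]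
      -- compute ρ s W pointwise
      rw [h1]
      funext ω
      by_cases hω : ω ∈ A
      · have e2 := hreg s hsle W A hAmeas
        have e3 := hreg s hsle X A hAmeas
        rw [hid s hsle X (hstop s)] at e3
        have : A.indicator (ρ s W) = A.indicator X := by
          rw [← e2, hAW, e3]
        have := congrFun this ω
        rw [Set.indicator_of_mem hω, Set.indicator_of_mem hω] at this
        simpa [hX] using this
      · have hω' : ω ∈ Aᶜ := hω
        have e2 := hreg s hsle W Aᶜ hAmeas.compl
        have e3 := hreg s hsle (fun ω => M (s + 1) ω + (X ω - M s ω)) Aᶜ hAmeas.compl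
        have hXsmeas : Measurable[F s] (fun ω => X ω - M s ω) :=
          (hstop s).sub (hMadapted s)
        have e4 : ρ s (fun ω => M (s + 1) ω + (X ω - M s ω))
            = fun ω => M s ω + (X ω - M s ω) := by
          have := hcti s hsle (M (s + 1)) (fun ω => X ω - M s ω) hXsmeas
          have hMs := hMmart s hsltT
          calc ρ s (fun ω => M (s + 1) ω + (X ω - M s ω))
              = ρ s (M (s + 1) + fun ω => X ω - M s ω) := rfl
            _ = ρ s (M (s + 1)) + fun ω => X ω - M s ω := this
            _ = M s + fun ω => X ω - M s ω := by rw [← hMs]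
            _ = fun ω => M s ω + (X ω - M s ω) := rfl
        have : Aᶜ.indicator (ρ s W)
            = Aᶜ.indicator (fun ω => M s ω + (X ω - M s ω)) := by
          rw [← e2, hAcW, e3, e4]
        have := congrFun this ω
        rw [Set.indicator_of_mem hω', Set.indicator_of_mem hω'] at this
        simpa [hX] using this
  -- conclude ρ_t (M_τ) = M_t
  have hoptional : ρ t N = M t := by
    have := key (T - t) t (by omega)
    rw [this]
    funext ω
    congr 1
    exact Nat.min_eq_right (hτb ω).1
  -- main estimate
  set Y : Ω → ℝ := fun ω => H (τ ω) ω + M t ω - M (τ ω) ω with hY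
  set Z : Ω → ℝ := fun ω => M (τ ω) ω - M t ω with hZ
  have hsplit : (fun ω => H (τ ω) ω) = Y + Z := by
    funext ω; simp only [hY, hZ, Pi.add_apply]; ring
  have hZzero : ρ t Z = 0 := by
    have hZeq : Z = N + (-(M t)) := by
      funext ω; simp [hZ, hN, sub_eq_add_neg]
    rw [hZeq, hcti t ht N (-(M t)) (hMadapted t).neg, hoptional]
    funext ω; simp
  calc ρ t (fun ω => H (τ ω) ω) = ρ t (Y + Z) := by rw [hsplit]
    _ ≤ ρ t Y + ρ t Z := hsub t ht Y Z
    _ = ρ t Y := by rw [hZzero]; funext ω; simp
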